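/- Let M be a ℚ-vector space with additive endomorphisms t and s satisfying t∘s - s∘t = s∘s. If t^p M = 0 for some positive integer p, then s^(2p) M = 0. -/
import Mathlib

section Aux
variable {M : Type*} [AddCommGroup M] [Module ℚ M] (t s : AddMonoid.End M)

lemma auxA (ht : t * s = s * t + s * s) (n : ℕ) :
    t * s ^ n = s ^ n * (t + n • s) := by
  induction n with
  | zero => simp
  | succ n ih =>
    have h1 : t * s ^ (n+1) = (t * s ^ n) * s := by rw [pow_succ, mul_assoc]
    rw [h1, ih, pow_succ, mul_assoc, mul_assoc]
    congr 1
    rw [add_mul, smul_mul_assoc, ht, mul_add, mul_smul_comm, succ_nsmul]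
    abel

lemma auxB (ht : t * s = s * t + s * s) (k n : ℕ) :
    t ^ k * s ^ n = s ^ n * (t + n • s) ^ k := by
  induction k with
  | zero => simp
  | succ k ih =>
    rw [pow_succ, mul_assoc, auxA t s ht, ← mul_assoc, ih, mul_assoc, ← pow_succ]

lemma auxC (m : M) (k : ℕ) :
    ∃ c : ℕ → M, c k = (s ^ k) m ∧ ∀ n : ℕ,
      ((t + n • s) ^ k) m = ∑ i ∈ Finset.range (k+1), (n : ℚ) ^ i • c i := by
  induction k with
  | zero => exact ⟨fun _ => m, by simp, fun n => by simp⟩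
  | succ k ih =>
    obtain ⟨c, hck, hc⟩ := ih
    refine ⟨fun i => (if i ≤ k then t (c i) else 0) + (if i = 0 then 0 else s (c (i-1))), ?_, ?_⟩
    · have hs : (s ^ (k+1)) m = s ((s ^ k) m) := by rw [pow_succ']; rfl
      simp [hs, hck]
    · intro n
      have h1 : ((t + n • s) ^ (k+1)) m = (t + n • s) (((t + n • s) ^ k) m) := by
        rw [pow_succ']; rfl
      rw [h1, hc n, map_sum]
      have h2 : ∀ i ∈ Finset.range (k+1),
          (t + n • s) ((n:ℚ) ^ i • c i)
            = (n:ℚ) ^ i • t (c i) + (n:ℚ) ^ (i+1) • s (c i) := by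
        intro i _
        have h3 : (t + n • s) ((n:ℚ) ^ i • c i)
            = t ((n:ℚ) ^ i • c i) + n • s ((n:ℚ) ^ i • c i) := rfl
        rw [h3, map_rat_smul, map_rat_smul, ← Nat.cast_smul_eq_nsmul ℚ, smul_smul, ← pow_succ']
      rw [Finset.sum_congr rfl h2, Finset.sum_add_distrib]
      conv_rhs => simp only [smul_add]
      rw [Finset.sum_add_distrib]
      congr 1
      · conv_rhs => rw [Finset.sum_range_succ]
        rw [if_neg (show ¬ (k+1 ≤ k) by omega)]
        simp only [smul_zero, add_zero]
        refine Finset.sum_congr rfl fun i hi => ?_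
        rw [if_pos (by simpa [Nat.lt_succ_iff] using hi)]
      · rw [Finset.sum_range_succ'
          (fun i => (n:ℚ) ^ i • (if i = 0 then 0 else s (c (i-1))))]
        simp

end Aux

lemma auxD {M : Type*} [AddCommGroup M] [Module ℚ M] (N : ℕ) (c : ℕ → M)
    (h : ∀ n : ℕ, n ≤ N → ∑ i ∈ Finset.range (N+1), (n : ℚ) ^ i • c i = 0) :
    c N = 0 := by
  rw [← Module.forall_dual_apply_eq_zero_iff ℚ]
  intro φ
  set q : Polynomial ℚ := ∑ i ∈ Finset.range (N+1), Polynomial.C (φ (c i)) * Polynomial.X ^ i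
    with hq
  have hdeg : q.natDegree ≤ N := by
    refine (Polynomial.natDegree_sum_le _ _).trans ?_
    rw [Finset.fold_max_le]
    refine ⟨Nat.zero_le _, fun i hi => ?_⟩
    exact (Polynomial.natDegree_C_mul_le _ _).trans
      ((Polynomial.natDegree_X_pow_le i).trans (by simpa [Nat.lt_succ_iff] using hi))
  have heval : ∀ i : Fin (N+1), q.eval ((i : ℕ) : ℚ) = 0 := by
    intro i
    have := congrArg φ (h i (Nat.lt_succ_iff.mp i.isLt))
    rw [map_sum, map_zero] at this
    rw [hq, Polynomial.eval_finset_sum]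
    rw [← this]
    refine Finset.sum_congr rfl fun j _ => ?_
    rw [map_smul, smul_eq_mul, Polynomial.eval_mul, Polynomial.eval_C, Polynomial.eval_pow,
      Polynomial.eval_X, mul_comm]
  have hq0 : q = 0 := by
    refine Polynomial.eq_zero_of_natDegree_lt_card_of_eval_eq_zero q
      (f := fun i : Fin (N+1) => ((i : ℕ) : ℚ)) ?_ heval ?_
    · intro a b hab
      simp only at hab
      exact Fin.ext (by exact_mod_cast hab)
    · simpa using Nat.lt_succ_of_le hdeg
  have : q.coeff N = φ (c N) := by
    rw [hq, Polynomial.finset_sum_coeff]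
    simp only [Polynomial.coeff_C_mul, Polynomial.coeff_X_pow, mul_ite, mul_one, mul_zero]
    rw [Finset.sum_ite_eq (Finset.range (N+1)) N (fun i => φ (c i))]
    simp
  rw [hq0] at this
  simpa using this.symm

theorem s_pow_two_p_annihilates (M : Type*) [AddCommGroup M] [Module ℚ M]
    (t s : AddMonoid.End M) (h : t * s - s * t = s * s)
    (p : ℕ) (hp : 0 < p) (htp : ∀ m : M, (t ^ p) m = 0) :
    ∀ m : M, (s ^ (2 * p)) m = 0 := by
  have ht : t * s = s * t + s * s := by rw [← h]; abel
  intro m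
  obtain ⟨c, hck, hc⟩ := auxC t s m p
  have key : ∀ n : ℕ, n ≤ p → (s ^ p) (((t + n • s) ^ p) m) = 0 := by
    intro n hn
    have e1 : (s ^ p : AddMonoid.End M) = s ^ (p - n) * s ^ n := by
      rw [← pow_add]
      congr 1
      omega
    have e2 : (s ^ p) (((t + n • s) ^ p) m)
        = (s ^ (p - n)) ((s ^ n * (t + n • s) ^ p) m) := by rw [e1]; rfl
    rw [e2, ← auxB t s ht p n]
    have e3 : ((t ^ p * s ^ n : AddMonoid.End M)) m = (t ^ p) ((s ^ n) m) := rfl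
    rw [e3, htp, map_zero]
  have h0 : ∀ n : ℕ, n ≤ p →
      ∑ i ∈ Finset.range (p+1), (n : ℚ) ^ i • (s ^ p) (c i) = 0 := by
    intro n hn
    have e4 : (s ^ p) (((t + n • s) ^ p) m)
        = ∑ i ∈ Finset.range (p+1), (n : ℚ) ^ i • (s ^ p) (c i) := by
      rw [hc n, map_sum]
      exact Finset.sum_congr rfl fun i _ => map_rat_smul _ _ _
    rw [← e4]
    exact key n hn
  have hd := auxD p (fun i => (s ^ p) (c i)) h0
  simp only [hck] at hd
  have e5 : (s ^ (2 * p)) m = (s ^ p) ((s ^ p) m) := by rw [two_mul, pow_add]; rfl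
  rw [e5]
  exact hd
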